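/- (Recovery of weights) Let [n_1,…,n_s] and [ñ_1,…,ñ_{s̃}] be finite multisets of integers ≥ 2 with χ_{[n_1,…,n_s]} = χ_{[ñ_1,…,ñ_{s̃}]} in ℤ[X]. Then: (a) for every integer d ≥ 3, the number of indices i with n_i = d equals the number of indices i with ñ_i = d; (b) s ≡ s̃ (mod 2); and (c) the number of indices i with n_i = 2 is congruent modulo 2 to the number of indices i with ñ_i = 2. -/

import Mathlib

open Matrix Polynomial

/-- The Coxeter matrix `Φ_[n]` of the linearly oriented quiver of type `A_{n-1}`:
the `(n-1) × (n-1)` integer matrix whose `(i,j)`-entry is `1` if `j = i + 1`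
(for rows other than the last), whose last row has all entries `-1`, and whose
other entries are `0`. -/
def PhiA (n : ℕ) : Matrix (Fin (n - 1)) (Fin (n - 1)) ℤ :=
  fun i j =>
    if (i : ℕ) = n - 2 then -1
    else if (j : ℕ) = (i : ℕ) + 1 then 1 else 0

/-- The Kronecker (tensor) product `Φ_{[n_1,…,n_s]} = Φ_{[n_1]} ⊗ ⋯ ⊗ Φ_{[n_s]}`,
realized on the index type `Π i, Fin (n i - 1)`. -/
def PhiProd {s : ℕ} (n : Fin s → ℕ) :
    Matrix ((i : Fin s) → Fin (n i - 1)) ((i : Fin s) → Fin (n i - 1)) ℤ :=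
  fun x y => ∏ i, PhiA (n i) (x i) (y i)

/-- The characteristic polynomial `χ_{[n_1,…,n_s]} ∈ ℤ[X]` of `Φ_{[n_1,…,n_s]}`. -/
noncomputable def Chi {s : ℕ} (n : Fin s → ℕ) : Polynomial ℤ :=
  (PhiProd n).charpoly

/-- The standard primitive complex `m`-th root of unity `exp(2π√-1/m)`. -/
noncomputable def zeta (m : ℕ) : ℂ := Complex.exp (2 * Real.pi * Complex.I / m)

lemma zeta_prim {n : ℕ} (hn : 2 ≤ n) : IsPrimitiveRoot (zeta n) n :=
  Complex.isPrimitiveRoot_exp n (by omega)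

lemma geom_range {n : ℕ} (hn : 1 ≤ n) {w : ℂ} (hw : w ^ n = 1) :
    ∑ l ∈ Finset.range n, w ^ l = if w = 1 then (n : ℂ) else 0 := by
  split_ifs with h
  · simp [h]
  · rw [geom_sum_eq h, hw]; simp

noncomputable def Pm (n : ℕ) : Matrix (Fin (n - 1)) (Fin (n - 1)) ℂ :=
  fun i j => (zeta n ^ ((j : ℕ) + 1)) ^ (i : ℕ)

noncomputable def Dv (n : ℕ) : Fin (n - 1) → ℂ := fun j => zeta n ^ ((j : ℕ) + 1)

lemma Dv_ne_one {n : ℕ} (hn : 2 ≤ n) (j : Fin (n - 1)) : Dv n j ≠ 1 := by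
  intro h
  have h2 := (zeta_prim hn).pow_eq_one_iff_dvd ((j : ℕ) + 1)
  rw [Dv] at h
  have hj := j.2
  have := h2.mp h
  have := Nat.le_of_dvd (by omega) this
  omega

lemma Dv_pow_n {n : ℕ} (hn : 2 ≤ n) (j : Fin (n - 1)) : Dv n j ^ n = 1 := by
  rw [Dv, ← pow_mul, mul_comm, pow_mul, (zeta_prim hn).pow_eq_one, one_pow]

lemma sum_Dv_pow {n : ℕ} (hn : 2 ≤ n) (k : ℕ) :
    ∑ c : Fin (n - 1), Dv n c ^ k = (if n ∣ k then (n : ℂ) else 0) - 1 := by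
  have hz : ∀ c : Fin (n - 1), Dv n c ^ k = (zeta n ^ k) ^ ((c : ℕ) + 1) := by
    intro c; rw [Dv, ← pow_mul, mul_comm, pow_mul]
  simp_rw [hz]
  set w := zeta n ^ k with hw
  have hwn : w ^ n = 1 := by
    rw [hw, ← pow_mul, mul_comm, pow_mul, (zeta_prim hn).pow_eq_one, one_pow]
  have h1 : w = 1 ↔ n ∣ k := (zeta_prim hn).pow_eq_one_iff_dvd k
  have hrange : ∑ c : Fin (n - 1), w ^ ((c : ℕ) + 1)
      = ∑ c ∈ Finset.range (n - 1), w ^ (c + 1) := by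
    rw [← Fin.sum_univ_eq_sum_range (fun c => w ^ (c + 1)) (n - 1)]
  have hn' : n - 1 + 1 = n := by omega
  have hsum : ∑ l ∈ Finset.range n, w ^ l
      = (∑ c ∈ Finset.range (n - 1), w ^ (c + 1)) + w ^ 0 := by
    have h := Finset.sum_range_succ' (fun l => w ^ l) (n - 1)
    rw [hn'] at h
    simpa using h
  rw [hrange]
  have hg := geom_range (by omega : 1 ≤ n) hwn
  rw [hsum] at hg
  have hs2 : ∑ c ∈ Finset.range (n - 1), w ^ (c + 1) = (if w = 1 then (n : ℂ) else 0) - 1 := by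
    rw [← hg]; simp
  rw [hs2, if_congr h1 rfl rfl]


lemma Pm_det_isUnit {n : ℕ} (hn : 2 ≤ n) : IsUnit (Pm n).det := by
  rw [isUnit_iff_ne_zero]
  have hPm : Pm n = (Matrix.vandermonde (Dv n)).transpose := by
    ext i j; rfl
  rw [hPm, Matrix.det_transpose, Matrix.det_vandermonde]
  rw [Finset.prod_ne_zero_iff]
  intro i _
  rw [Finset.prod_ne_zero_iff]
  intro j hj
  rw [Finset.mem_Ioi] at hj
  intro hzero
  have heq : Dv n j = Dv n i := by linear_combination hzero
  have : ((j : ℕ) + 1) = ((i : ℕ) + 1) :=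
    (zeta_prim hn).pow_inj (by omega) (by omega) heq
  have : i = j := by apply Fin.ext; omega
  omega

lemma phiA_mul_Pm {n : ℕ} (hn : 2 ≤ n) :
    (PhiA n).map (Int.cast : ℤ → ℂ) * Pm n = Pm n * Matrix.diagonal (Dv n) := by
  ext i j
  rw [Matrix.mul_apply, Matrix.mul_diagonal]
  have hij : Pm n i j * Dv n j = (Dv n j) ^ ((i : ℕ) + 1) := by
    rw [Pm, Dv]; ring
  rw [hij]
  by_cases hi : (i : ℕ) = n - 2
  · have hrow : ∀ l, ((PhiA n).map (Int.cast : ℤ → ℂ)) i l = -1 := by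
      intro l; simp [PhiA, Matrix.map_apply, hi]
    simp_rw [hrow, neg_one_mul]
    rw [Finset.sum_neg_distrib]
    have hPml : ∀ l : Fin (n - 1), Pm n l j = Dv n j ^ (l : ℕ) := fun l => rfl
    simp_rw [hPml]
    have hr : ∑ l : Fin (n - 1), Dv n j ^ (l : ℕ)
        = ∑ l ∈ Finset.range (n - 1), Dv n j ^ l :=
      Fin.sum_univ_eq_sum_range _ _
    have hn' : n - 1 + 1 = n := by omega
    have hsum : ∑ l ∈ Finset.range n, Dv n j ^ l
        = (∑ l ∈ Finset.range (n - 1), Dv n j ^ l) + Dv n j ^ (n - 1) := by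
      have h := Finset.sum_range_succ (fun l => Dv n j ^ l) (n - 1)
      rw [hn'] at h; exact h
    have hg := geom_range (by omega : 1 ≤ n) (Dv_pow_n hn j)
    rw [if_neg (Dv_ne_one hn j), hsum] at hg
    rw [hr]
    have : (i : ℕ) + 1 = n - 1 := by omega
    rw [this]
    linear_combination -hg
  · have hi2 : (i : ℕ) + 1 < n - 1 := by have := i.2; omega
    set l0 : Fin (n - 1) := ⟨(i : ℕ) + 1, hi2⟩ with hl0
    rw [Finset.sum_eq_single l0]
    · have h1 : ((PhiA n).map (Int.cast : ℤ → ℂ)) i l0 = 1 := by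
        simp [PhiA, Matrix.map_apply, hi, hl0]
      rw [h1, one_mul]
      rfl
    · intro l _ hl
      have h0 : ((PhiA n).map (Int.cast : ℤ → ℂ)) i l = 0 := by
        have : (l : ℕ) ≠ (i : ℕ) + 1 := by
          intro hc; apply hl; apply Fin.ext; rw [hc]
        simp [PhiA, Matrix.map_apply, hi, this]
      rw [h0, zero_mul]
    · intro hmem; exact absurd (Finset.mem_univ l0) hmem

noncomputable def bigM {s : ℕ} (n : Fin s → ℕ)
    (A : ∀ i, Matrix (Fin (n i - 1)) (Fin (n i - 1)) ℂ) :
    Matrix (∀ i, Fin (n i - 1)) (∀ i, Fin (n i - 1)) ℂ :=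
  fun x y => ∏ i, A i (x i) (y i)

lemma bigM_mul {s : ℕ} (n : Fin s → ℕ)
    (A B : ∀ i, Matrix (Fin (n i - 1)) (Fin (n i - 1)) ℂ) :
    bigM n A * bigM n B = bigM n (fun i => A i * B i) := by
  ext x y
  rw [Matrix.mul_apply]
  simp_rw [bigM, ← Finset.prod_mul_distrib]
  rw [← Fintype.prod_sum (fun i c => A i (x i) c * B i c (y i))]
  exact Finset.prod_congr rfl fun i _ => (Matrix.mul_apply).symm

lemma bigM_one {s : ℕ} (n : Fin s → ℕ) : bigM n (fun _ => 1) = 1 := by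
  ext x y
  rw [bigM, Matrix.one_apply]
  by_cases h : x = y
  · subst h; simp
  · rw [if_neg h]
    obtain ⟨i, hi⟩ := Function.ne_iff.mp h
    exact Finset.prod_eq_zero (Finset.mem_univ i) (by simp [Matrix.one_apply, hi])

lemma bigM_diagonal {s : ℕ} (n : Fin s → ℕ) (d : ∀ i, Fin (n i - 1) → ℂ) :
    bigM n (fun i => Matrix.diagonal (d i))
      = Matrix.diagonal (fun x => ∏ i, d i (x i)) := by
  ext x y
  rw [bigM, Matrix.diagonal_apply]
  by_cases h : x = y
  · subst h; simp [Matrix.diagonal_apply]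
  · rw [if_neg h]
    obtain ⟨i, hi⟩ := Function.ne_iff.mp h
    exact Finset.prod_eq_zero (Finset.mem_univ i) (by simp [Matrix.diagonal_apply, hi])

lemma charpoly_conj {ι : Type*} [Fintype ι] [DecidableEq ι] (P D Q : Matrix ι ι ℂ)
    (hPQ : P * Q = 1) : (P * D * Q).charpoly = D.charpoly := by
  have hmap : ∀ (M N : Matrix ι ι ℂ), (M * N).map (⇑(C : ℂ →+* ℂ[X]))
      = M.map C * N.map C := fun M N => Matrix.map_mul (f := (C : ℂ →+* ℂ[X]))
  have hone : (1 : Matrix ι ι ℂ).map (C : ℂ → ℂ[X]) = 1 :=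
    Matrix.map_one _ (map_zero C) (map_one C)
  have hC : charmatrix (P * D * Q) = (P.map C) * charmatrix D * (Q.map C) := by
    unfold charmatrix
    rw [Matrix.mul_sub, Matrix.sub_mul]
    congr 1
    · have h1 : P.map ⇑C * Matrix.scalar ι (X : ℂ[X]) = Matrix.scalar ι (X : ℂ[X]) * P.map ⇑C := by
        ext i j
        rw [Matrix.scalar_apply, Matrix.mul_diagonal, Matrix.diagonal_mul, mul_comm]
      rw [h1, Matrix.mul_assoc]
      have h2 : P.map ⇑C * Q.map ⇑C = 1 := by
        rw [← hmap, hPQ]; exact hone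
      rw [h2, Matrix.mul_one]
    · simp only [RingHom.mapMatrix_apply]
      rw [← hmap, ← hmap]
  rw [Matrix.charpoly, Matrix.charpoly, hC, Matrix.det_mul, Matrix.det_mul]
  have hdet : (P.map ⇑C).det * (Q.map ⇑C).det = 1 := by
    rw [← Matrix.det_mul, ← hmap, hPQ]
    rw [hone, Matrix.det_one]
  calc (P.map ⇑C).det * (charmatrix D).det * (Q.map ⇑C).det
      = (P.map ⇑C).det * (Q.map ⇑C).det * (charmatrix D).det := by ring
    _ = (charmatrix D).det := by rw [hdet, one_mul]

lemma charpoly_diagonal {ι : Type*} [Fintype ι] [DecidableEq ι] (d : ι → ℂ) :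
    (Matrix.diagonal d).charpoly = ∏ i, (X - C (d i)) := by
  have h : charmatrix (Matrix.diagonal d) = Matrix.diagonal (fun i => X - C (d i)) := by
    ext i j
    by_cases hij : i = j
    · subst hij; simp
    · simp [charmatrix_apply, Matrix.diagonal_apply, hij]
  rw [Matrix.charpoly, h, Matrix.det_diagonal]


lemma chi_map_eq {s : ℕ} (n : Fin s → ℕ) (hn : ∀ i, 2 ≤ n i) :
    (Chi n).map (Int.castRingHom ℂ)
      = ∏ x : (∀ i, Fin (n i - 1)), (X - C (∏ i, Dv (n i) (x i))) := by
  have hMc : (PhiProd n).map (⇑(Int.castRingHom ℂ))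
      = bigM n (fun i => (PhiA (n i)).map (Int.cast : ℤ → ℂ)) := by
    ext x y
    simp only [PhiProd, bigM, Matrix.map_apply, map_intCast, eq_intCast, Int.cast_prod]
  rw [Chi, ← Matrix.charpoly_map, hMc]
  set Pb := bigM n (fun i => Pm (n i)) with hPb
  set Qb := bigM n (fun i => (Pm (n i))⁻¹) with hQb
  set Db := Matrix.diagonal (fun x : (∀ i, Fin (n i - 1)) => ∏ i, Dv (n i) (x i)) with hDb
  have hPQ : Pb * Qb = 1 := by
    rw [hPb, hQb, bigM_mul]
    have : (fun i => Pm (n i) * (Pm (n i))⁻¹) = fun _ => (1 : Matrix _ _ ℂ) := by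
      funext i
      exact Matrix.mul_nonsing_inv _ (Pm_det_isUnit (hn i))
    rw [this, bigM_one]
  have hMP : bigM n (fun i => (PhiA (n i)).map (Int.cast : ℤ → ℂ)) * Pb = Pb * Db := by
    rw [hPb, bigM_mul]
    have : (fun i => (PhiA (n i)).map (Int.cast : ℤ → ℂ) * Pm (n i))
        = fun i => Pm (n i) * Matrix.diagonal (Dv (n i)) := by
      funext i; exact phiA_mul_Pm (hn i)
    rw [this, ← bigM_mul, bigM_diagonal, ← hDb, ← hPb]
  have hM : bigM n (fun i => (PhiA (n i)).map (Int.cast : ℤ → ℂ)) = Pb * Db * Qb := by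
    calc bigM n (fun i => (PhiA (n i)).map (Int.cast : ℤ → ℂ))
        = bigM n (fun i => (PhiA (n i)).map (Int.cast : ℤ → ℂ)) * (Pb * Qb) := by
          rw [hPQ, Matrix.mul_one]
      _ = (bigM n (fun i => (PhiA (n i)).map (Int.cast : ℤ → ℂ)) * Pb) * Qb := by
          rw [Matrix.mul_assoc]
      _ = Pb * Db * Qb := by rw [hMP]
  rw [hM, charpoly_conj _ _ _ hPQ, hDb, _root_.charpoly_diagonal]

lemma finset_prod_X_sub_C {ι : Type*} [Fintype ι] (f : ι → ℂ) :
    ∏ x : ι, (X - C (f x)) = ((Finset.univ.val.map f).map (fun a => X - C a)).prod := by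
  rw [Multiset.map_map]
  rfl

lemma T_eq {s t : ℕ} (n : Fin s → ℕ) (m : Fin t → ℕ)
    (hn : ∀ i, 2 ≤ n i) (hm : ∀ i, 2 ≤ m i) (h : Chi n = Chi m) (k : ℕ) :
    ∏ i, ((if n i ∣ k then (n i : ℤ) else 0) - 1)
      = ∏ i, ((if m i ∣ k then (m i : ℤ) else 0) - 1) := by
  have hmapeq := congrArg (Polynomial.map (Int.castRingHom ℂ)) h
  rw [chi_map_eq n hn, chi_map_eq m hm] at hmapeq
  set μn : (∀ i, Fin (n i - 1)) → ℂ := fun x => ∏ i, Dv (n i) (x i) with hμn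
  set μm : (∀ i, Fin (m i - 1)) → ℂ := fun y => ∏ i, Dv (m i) (y i) with hμm
  have hR : (Finset.univ.val.map μn) = (Finset.univ.val.map μm) := by
    have h2 := congrArg Polynomial.roots hmapeq
    rwa [finset_prod_X_sub_C, finset_prod_X_sub_C,
      roots_multiset_prod_X_sub_C, roots_multiset_prod_X_sub_C] at h2
  have hps : ∑ x : (∀ i, Fin (n i - 1)), μn x ^ k
      = ∑ y : (∀ i, Fin (m i - 1)), μm y ^ k := by
    have h3 := congrArg (fun R : Multiset ℂ => (R.map (· ^ k)).sum) hR
    simp only [Multiset.map_map, Function.comp] at h3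
    exact h3
  have hcompn : ∑ x : (∀ i, Fin (n i - 1)), μn x ^ k
      = ∏ i, ((if n i ∣ k then (n i : ℂ) else 0) - 1) := by
    simp_rw [hμn, ← Finset.prod_pow]
    rw [← Fintype.prod_sum (fun i c => Dv (n i) c ^ k)]
    exact Finset.prod_congr rfl fun i _ => sum_Dv_pow (hn i) k
  have hcompm : ∑ y : (∀ i, Fin (m i - 1)), μm y ^ k
      = ∏ i, ((if m i ∣ k then (m i : ℂ) else 0) - 1) := by
    simp_rw [hμm, ← Finset.prod_pow]
    rw [← Fintype.prod_sum (fun i c => Dv (m i) c ^ k)]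
    exact Finset.prod_congr rfl fun i _ => sum_Dv_pow (hm i) k
  have hfin := (hcompn.symm.trans hps).trans hcompm
  have hcast : ∀ {u : ℕ} (p : Fin u → ℕ),
      ((∏ i, ((if p i ∣ k then (p i : ℤ) else 0) - 1) : ℤ) : ℂ)
        = ∏ i, ((if p i ∣ k then (p i : ℂ) else 0) - 1) := by
    intro u p
    rw [Int.cast_prod]
    exact Finset.prod_congr rfl fun i _ => by split_ifs <;> simp
  exact Int.cast_injective ((hcast n).trans (hfin.trans (hcast m).symm))

lemma neg_one_pow_mod {a b : ℕ} (h : (-1 : ℤ) ^ a = (-1 : ℤ) ^ b) : a % 2 = b % 2 := by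
  rcases Nat.even_or_odd a with ha | ha <;> rcases Nat.even_or_odd b with hb | hb
  · rw [Nat.even_iff] at ha hb; omega
  · rw [ha.neg_one_pow, hb.neg_one_pow] at h; norm_num at h
  · rw [ha.neg_one_pow, hb.neg_one_pow] at h; norm_num at h
  · rw [Nat.odd_iff] at ha hb; omega

lemma prod_one_side {u : ℕ} (p : Fin u → ℕ) (hp : ∀ i, 2 ≤ p i) :
    ∏ i, ((if p i ∣ 1 then (p i : ℤ) else 0) - 1) = (-1) ^ u := by
  have hterm : ∀ i ∈ Finset.univ, ((if p i ∣ 1 then (p i : ℤ) else 0) - 1) = -1 := by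
    intro i _
    rw [if_neg]
    · norm_num
    · intro hdvd
      have h1 := Nat.le_of_dvd one_pos hdvd
      have := hp i
      omega
  rw [Finset.prod_congr rfl hterm, Finset.prod_const, Finset.card_univ, Fintype.card_fin]

lemma prod_two_side {u : ℕ} (p : Fin u → ℕ) (hp : ∀ i, 2 ≤ p i) :
    (∏ i, ((if p i ∣ 1 then (p i : ℤ) else 0) - 1))
      * (∏ i, ((if p i ∣ 2 then (p i : ℤ) else 0) - 1))
      = (-1) ^ ((Finset.univ.filter (fun i => p i = 2)).card) := by
  rw [← Finset.prod_mul_distrib]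
  have hterm : ∀ i ∈ Finset.univ,
      ((if p i ∣ 1 then (p i : ℤ) else 0) - 1) * ((if p i ∣ 2 then (p i : ℤ) else 0) - 1)
        = (if p i = 2 then (-1 : ℤ) else 1) := by
    intro i _
    have h2 := hp i
    have hnd1 : ¬ p i ∣ 1 := by
      intro hdvd; have := Nat.le_of_dvd one_pos hdvd; omega
    rw [if_neg hnd1]
    by_cases he : p i = 2
    · have hdvd : p i ∣ 2 := by rw [he]
      rw [if_pos he, if_pos hdvd, he]; norm_num
    · rw [if_neg he, if_neg ?_]
      · norm_num
      · intro hdvd; have := Nat.le_of_dvd two_pos hdvd; omega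
  rw [Finset.prod_congr rfl hterm, Finset.prod_ite, Finset.prod_const, Finset.prod_const,
    one_pow, mul_one]

theorem recover_weights {s t : ℕ} (n : Fin s → ℕ) (m : Fin t → ℕ)
    (hn : ∀ i, 2 ≤ n i) (hm : ∀ i, 2 ≤ m i)
    (h : Chi n = Chi m) :
    (∀ d : ℕ, 3 ≤ d →
      (Finset.univ.filter (fun i => n i = d)).card =
        (Finset.univ.filter (fun i => m i = d)).card) ∧
    s % 2 = t % 2 ∧
    (Finset.univ.filter (fun i => n i = 2)).card % 2 =
      (Finset.univ.filter (fun i => m i = 2)).card % 2 := by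
  have key := T_eq n m hn hm h
  refine ⟨?_, ?_, ?_⟩
  · intro d
    induction d using Nat.strong_induction_on with
    | _ d IH =>
    intro hd3
    set T : Finset ℕ := (Finset.image n Finset.univ ∪ Finset.image m Finset.univ) ∪ {d} with hT
    have hdt : d ∈ T := by simp [hT]
    set g : ℕ → ℤ := fun e => ((if e ∣ d then (e : ℤ) else 0) - 1) ^ 2 with hg
    have hmem_ge : ∀ e ∈ T, 2 ≤ e := by
      intro e he
      simp only [hT, Finset.mem_union, Finset.mem_image, Finset.mem_singleton] at he
      rcases he with (⟨i, _, rfl⟩ | ⟨i, _, rfl⟩) | rfl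
      exacts [hn i, hm i, by omega]
    have hgpos : ∀ e ∈ T, 1 ≤ g e := by
      intro e he
      have h2 := hmem_ge e he
      rw [hg]; dsimp only
      split_ifs with hdvd
      · have : (2 : ℤ) ≤ (e : ℤ) := by exact_mod_cast h2
        nlinarith
      · norm_num
    have hfib : ∀ {u : ℕ} (p : Fin u → ℕ), (∀ i, p i ∈ T) →
        ∏ i, g (p i) = ∏ e ∈ T, g e ^ (Finset.univ.filter (fun i => p i = e)).card := by
      intro u p hpt
      rw [← Finset.prod_fiberwise_of_maps_to' (fun i _ => hpt i) g]
      exact Finset.prod_congr rfl fun e _ => Finset.prod_const _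
    have hsq : ∏ i, g (n i) = ∏ i, g (m i) := by
      rw [hg]
      simp only
      rw [Finset.prod_pow, Finset.prod_pow, key d]
    have hnT : ∀ i, n i ∈ T := by
      intro i
      simp only [hT, Finset.mem_union, Finset.mem_image, Finset.mem_singleton]
      exact Or.inl (Or.inl ⟨i, Finset.mem_univ i, rfl⟩)
    have hmT : ∀ i, m i ∈ T := by
      intro i
      simp only [hT, Finset.mem_union, Finset.mem_image, Finset.mem_singleton]
      exact Or.inl (Or.inr ⟨i, Finset.mem_univ i, rfl⟩)
    rw [hfib n hnT, hfib m hmT] at hsq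
    rw [← Finset.mul_prod_erase T _ hdt, ← Finset.mul_prod_erase T _ hdt] at hsq
    have herase : ∏ e ∈ T.erase d, g e ^ (Finset.univ.filter (fun i => n i = e)).card
        = ∏ e ∈ T.erase d, g e ^ (Finset.univ.filter (fun i => m i = e)).card := by
      refine Finset.prod_congr rfl fun e he => ?_
      obtain ⟨hne, het⟩ := Finset.mem_erase.mp he
      have he2 := hmem_ge e het
      by_cases hdvd : e ∣ d
      · by_cases he3 : 3 ≤ e
        · have hlt : e < d := lt_of_le_of_ne (Nat.le_of_dvd (by omega) hdvd) hne
          rw [IH e hlt he3]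
        · have he2' : e = 2 := by omega
          subst he2'
          have hg1 : g 2 = 1 := by rw [hg]; simp [hdvd]
          rw [hg1, one_pow, one_pow]
      · have hg1 : g e = 1 := by rw [hg]; simp [hdvd]
        rw [hg1, one_pow, one_pow]
    rw [herase] at hsq
    have hX : (∏ e ∈ T.erase d, g e ^ (Finset.univ.filter (fun i => m i = e)).card) ≠ 0 := by
      rw [Finset.prod_ne_zero_iff]
      intro e he
      have h1 := hgpos e (Finset.mem_of_mem_erase he)
      exact pow_ne_zero _ (by omega)
    have e2 := mul_right_cancel₀ hX hsq
    have hgd : g d = (((d - 1) ^ 2 : ℕ) : ℤ) := by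
      rw [hg]
      simp only [dvd_refl, if_pos]
      have hc : (((d - 1) : ℕ) : ℤ) = (d : ℤ) - 1 := by
        have : 1 ≤ d := by omega
        push_cast [this]
        ring
      push_cast [hc]
      ring
    rw [hgd] at e2
    have e3 : ((d - 1) ^ 2 : ℕ) ^ (Finset.univ.filter (fun i => n i = d)).card
        = ((d - 1) ^ 2 : ℕ) ^ (Finset.univ.filter (fun i => m i = d)).card := by
      exact_mod_cast e2
    refine Nat.pow_right_injective ?_ e3
    have h2d : 2 ≤ d - 1 := by omega
    calc 2 ≤ d - 1 := h2d
      _ ≤ (d - 1) ^ 2 := Nat.le_self_pow (by norm_num) _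
  · have h1 := key 1
    rw [prod_one_side n hn, prod_one_side m hm] at h1
    exact neg_one_pow_mod h1
  · have h1 := key 1
    have h2 := key 2
    have hc : (-1 : ℤ) ^ (Finset.univ.filter (fun i => n i = 2)).card
        = (-1 : ℤ) ^ (Finset.univ.filter (fun i => m i = 2)).card := by
      rw [← prod_two_side n hn, ← prod_two_side m hm, h1, h2]
    exact neg_one_pow_mod hc
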